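/- Let F be a field, Γ an additive abelian group, ε a skew-symmetric bicharacter of Γ, A a Γ-graded associative unital ε-commutative F-algebra, and D a set of homogeneous color derivations of A such that A is graded D-simple. If u ∈ A is a nonzero homogeneous element with ∂(u) ∈ F·u for every ∂ ∈ D (a homogeneous common eigenvector, i.e. root vector), then u is a unit of A. -/

import Mathlib

/-- `d` is a homogeneous color derivation of degree `lam` of the `Γ`-graded algebra `A`
(with grading `𝒜`) relative to the bicharacter `ε`. -/
def IsHomColorDer {F : Type*} [Field F] {Γ : Type*} [AddCommGroup Γ]
    {A : Type*} [Ring A] [Algebra F A]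
    (ε : Γ → Γ → F) (𝒜 : Γ → Submodule F A) (lam : Γ) (d : Module.End F A) : Prop :=
  (∀ μ : Γ, ∀ a ∈ 𝒜 μ, d a ∈ 𝒜 (lam + μ)) ∧
  (∀ (l m : Γ) (a b : A), a ∈ 𝒜 l → b ∈ 𝒜 m →
    d (a * b) = d a * b + ε lam l • (a * d b))

/-- `A` is graded `D`-simple: the only `Γ`-graded two-sided ideals of `A` stable under
all derivations in `D` are `0` and `A`. -/
def IsGradedDSimple {F : Type*} [Field F] {Γ : Type*} [AddCommGroup Γ] [DecidableEq Γ]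
    {A : Type*} [Ring A] [Algebra F A]
    (𝒜 : Γ → Submodule F A) [GradedAlgebra 𝒜] (D : Set (Module.End F A)) : Prop :=
  ∀ I : Submodule F A,
    (∀ (a x : A), x ∈ I → a * x ∈ I ∧ x * a ∈ I) →
    (∀ x ∈ I, ∀ γ : Γ, (DirectSum.decompose 𝒜 x γ : A) ∈ I) →
    (∀ d ∈ D, ∀ x ∈ I, d x ∈ I) →
    I = ⊥ ∨ I = ⊤

/-- In a graded `D`-simple `ε`-commutative `Γ`-graded unital algebra,
every nonzero homogeneous common eigenvector (root vector) of the derivations in `D`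
is a unit. -/
theorem rootVector_isUnit
    {F : Type*} [Field F] {Γ : Type*} [AddCommGroup Γ] [DecidableEq Γ]
    {A : Type*} [Ring A] [Algebra F A]
    (ε : Γ → Γ → F)
    (hskew : ∀ l m : Γ, ε l m * ε m l = 1)
    (hmul : ∀ l m n : Γ, ε l (m + n) = ε l m * ε l n)
    (𝒜 : Γ → Submodule F A) [GradedAlgebra 𝒜]
    (hcomm : ∀ (l m : Γ) (a b : A), a ∈ 𝒜 l → b ∈ 𝒜 m → a * b = ε l m • (b * a))
    (D : Set (Module.End F A)) (deg : Module.End F A → Γ)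
    (hD : ∀ d ∈ D, IsHomColorDer ε 𝒜 (deg d) d)
    (hsimple : IsGradedDSimple 𝒜 D)
    (u : A) (γ : Γ) (hu : u ∈ 𝒜 γ) (hune : u ≠ 0)
    (hroot : ∀ d ∈ D, ∃ c : F, d u = c • u) :
    IsUnit u := by

  -- The left ideal A·u
  set I : Submodule F A := LinearMap.range (LinearMap.mulRight F u) with hI
  have hmemI : ∀ x : A, x ∈ I ↔ ∃ a : A, a * u = x := by
    intro x
    simp [hI, LinearMap.mem_range, LinearMap.mulRight_apply]
  -- moving u past elements using ε-commutativity
  have hswap : ∀ b : A, ∃ w : A, u * b = w * u := by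
    intro b
    induction b using DirectSum.Decomposition.inductionOn 𝒜 with
    | zero => exact ⟨0, by simp⟩
    | homogeneous m =>
        rename_i ν
        obtain ⟨b, hb⟩ := m
        exact ⟨ε γ ν • b, by rw [hcomm γ ν u b hu hb, smul_mul_assoc]⟩
    | add b b' hb hb' =>
        obtain ⟨w, hw⟩ := hb
        obtain ⟨w', hw'⟩ := hb'
        exact ⟨w + w', by rw [mul_add, hw, hw', add_mul]⟩
  have hswap' : ∀ b : A, ∃ w : A, b * u = u * w := by
    intro b
    induction b using DirectSum.Decomposition.inductionOn 𝒜 with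
    | zero => exact ⟨0, by simp⟩
    | homogeneous m =>
        rename_i ν
        obtain ⟨b, hb⟩ := m
        exact ⟨ε ν γ • b, by rw [hcomm ν γ b u hb hu, mul_smul_comm]⟩
    | add b b' hb hb' =>
        obtain ⟨w, hw⟩ := hb
        obtain ⟨w', hw'⟩ := hb'
        exact ⟨w + w', by rw [add_mul, hw, hw', mul_add]⟩
  -- I is a two-sided ideal
  have hideal : ∀ (a x : A), x ∈ I → a * x ∈ I ∧ x * a ∈ I := by
    intro a x hx
    obtain ⟨b, hb⟩ := (hmemI x).1 hx
    constructor
    · exact (hmemI _).2 ⟨a * b, by rw [← hb, mul_assoc]⟩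
    · obtain ⟨w, hw⟩ := hswap a
      exact (hmemI _).2 ⟨b * w, by rw [mul_assoc, ← hw, ← mul_assoc, hb]⟩
  -- I is graded
  have hgraded : ∀ x ∈ I, ∀ γ' : Γ, (DirectSum.decompose 𝒜 x γ' : A) ∈ I := by
    intro x hx γ'
    obtain ⟨b, hb⟩ := (hmemI x).1 hx
    subst hb
    clear hx
    induction b using DirectSum.Decomposition.inductionOn 𝒜 with
    | zero => simp
    | homogeneous m =>
        rename_i ν
        obtain ⟨b, hb⟩ := m
        have hbu : b * u ∈ 𝒜 (ν + γ) := SetLike.mul_mem_graded hb hu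
        by_cases h : γ' = ν + γ
        · subst h
          rw [DirectSum.decompose_of_mem_same 𝒜 hbu]
          exact (hmemI _).2 ⟨b, rfl⟩
        · rw [DirectSum.decompose_of_mem_ne 𝒜 hbu (Ne.symm h)]
          exact zero_mem I
    | add b b' hb hb' =>
        have : (b + b') * u = b * u + b' * u := add_mul b b' u
        rw [this, DirectSum.decompose_add]
        simp only [DirectSum.add_apply, Submodule.coe_add]
        exact add_mem hb hb'
  -- I is D-stable
  have hstable : ∀ d ∈ D, ∀ x ∈ I, d x ∈ I := by
    intro d hd x hx
    obtain ⟨b, hb⟩ := (hmemI x).1 hx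
    subst hb
    obtain ⟨c, hc⟩ := hroot d hd
    obtain ⟨hd1, hd2⟩ := hD d hd
    clear hx
    induction b using DirectSum.Decomposition.inductionOn 𝒜 with
    | zero => simp
    | homogeneous m =>
        rename_i ν
        obtain ⟨b, hb⟩ := m
        rw [hd2 ν γ b u hb hu, hc]
        refine add_mem ((hmemI _).2 ⟨d b, rfl⟩) ?_
        exact (hmemI _).2 ⟨(ε (deg d) ν * c) • b, by
          rw [smul_mul_assoc, mul_smul_comm, mul_smul, smul_smul]⟩
    | add b b' hb hb' =>
        have : (b + b') * u = b * u + b' * u := add_mul b b' u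
        rw [this, map_add]
        exact add_mem hb hb'
  -- conclude
  rcases hsimple I hideal hgraded hstable with h | h
  · exfalso
    apply hune
    have : u ∈ I := (hmemI u).2 ⟨1, one_mul u⟩
    rw [h] at this
    simpa using this
  · have h1 : (1 : A) ∈ I := by rw [h]; trivial
    obtain ⟨v, hv⟩ := (hmemI 1).1 h1
    obtain ⟨w, hw⟩ := hswap' v
    have huw : u * w = 1 := by rw [← hw, hv]
    have hvw : v = w := by
      calc v = v * (u * w) := by rw [huw, mul_one]
        _ = (v * u) * w := by rw [mul_assoc]
        _ = w := by rw [hv, one_mul]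
    exact ⟨⟨u, w, huw, by rw [← hvw, hv]⟩, rfl⟩
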